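/- Let λ₀ ∈ ℂ with λ₀ ≠ 0, and let λ₁ ∈ Λ¹V, λ₂ ∈ Λ²V, λ₃ ∈ Λ³V, λ₄ ∈ Λ⁴V, λ₅ ∈ Λ⁵V. Then the system of gravitational-spinor equations (E1) λ₀λ₅ + λ₁∧λ₄ − λ₂∧λ₃ = 0, (E2) −2λ₀λ₄ − 2λ₁∧λ₃ + λ₂∧λ₂ = 0, and (E3) −2ι_φ(λ₁)λ₅ + 2ι_φ(λ₂)∧λ₄ + ι_φ(λ₃)∧λ₃ = 0 for every φ ∈ V*, holds if and only if λ₄ = (λ₂∧λ₂ − 2λ₁∧λ₃)/(2λ₀), λ₅ = (λ₂∧λ₃ − λ₁∧λ₄)/λ₀, and (ι_φτ₃)∧τ₃ = 0 for every φ ∈ V*, where τ₃ = λ₃ − (1/λ₀)·λ₁∧λ₂. -/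

import Mathlib

noncomputable section

/-- The exterior algebra `Λ(V)` of `V = ℂ⁵`. -/
abbrev E5 : Type := ExteriorAlgebra ℂ (Fin 5 → ℂ)

/-- Contraction (interior product) `ι_φ` with a linear functional `φ ∈ V*`. -/
def ctrC (φ : Module.Dual ℂ (Fin 5 → ℂ)) : E5 →ₗ[ℂ] E5 :=
  CliffordAlgebra.contractLeft (Q := (0 : QuadraticForm ℂ (Fin 5 → ℂ))) φ

open ExteriorAlgebra
abbrev V5 : Type := Fin 5 → ℂ

lemma ctrC_ι_mul (φ : Module.Dual ℂ V5) (a : V5) (b : E5) :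
    ctrC φ (ι ℂ a * b) = φ a • b - ι ℂ a * ctrC φ b :=
  CliffordAlgebra.contractLeft_ι_mul φ a b

lemma ctrC_ι (φ : Module.Dual ℂ V5) (a : V5) :
    ctrC φ (ι ℂ a) = algebraMap ℂ E5 (φ a) :=
  CliffordAlgebra.contractLeft_ι _ φ a

lemma mem_one {x : E5} (hx : x ∈ ⋀[ℂ]^1 V5) : ∃ v : V5, x = ι ℂ v := by
  rw [exteriorPower, pow_one] at hx
  obtain ⟨v, hv⟩ := hx
  exact ⟨v, hv.symm⟩

lemma ι_mem_one (v : V5) : ι ℂ v ∈ ⋀[ℂ]^1 V5 := by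
  rw [exteriorPower, pow_one]
  exact LinearMap.mem_range_self _ v

lemma ι_mul_ι_mem_two (a b : V5) : ι ℂ a * ι ℂ b ∈ ⋀[ℂ]^2 V5 := by
  rw [exteriorPower, pow_two]
  exact Submodule.mul_mem_mul (LinearMap.mem_range_self _ a) (LinearMap.mem_range_self _ b)

lemma epow_induction (n : ℕ) {p : E5 → Prop} (hz : p 0)
    (hadd : ∀ x y, p x → p y → p (x + y))
    (hsmul : ∀ (c : ℂ) (x), p x → p (c • x))
    (hb : ∀ v : Fin n → V5, p (ιMulti ℂ n v))
    {x : E5} (hx : x ∈ ⋀[ℂ]^n V5) : p x := by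
  rw [← ιMulti_span_fixedDegree] at hx
  refine Submodule.span_induction ?_ hz (fun a b _ _ ha hb => hadd a b ha hb)
    (fun c a _ ha => hsmul c a ha) hx
  rintro _ ⟨v, rfl⟩
  exact hb v

lemma ιMulti_two (v : Fin 2 → V5) : ιMulti ℂ 2 v = ι ℂ (v 0) * ι ℂ (v 1) := by
  simp [ιMulti_apply, Matrix.vecTail]

lemma ιMulti_three (v : Fin 3 → V5) : ιMulti ℂ 3 v = ι ℂ (v 0) * (ι ℂ (v 1) * ι ℂ (v 2)) := by
  simp [ιMulti_apply, Matrix.vecTail, mul_assoc]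

lemma anticomm (a b : V5) : ι ℂ b * ι ℂ a = -(ι ℂ a * ι ℂ b) :=
  eq_neg_of_add_eq_zero_left (by rw [add_comm]; exact ι_add_mul_swap a b)

/-- elements of `Λ²` commute with elements of `Λ¹`. -/
lemma comm21 {x : E5} (hx : x ∈ ⋀[ℂ]^2 V5) (a : V5) : x * ι ℂ a = ι ℂ a * x := by
  refine epow_induction 2 (p := fun y => y * ι ℂ a = ι ℂ a * y) (by simp)
    (fun u v hu hv => by rw [add_mul, mul_add, hu, hv])
    (fun c u hu => by rw [smul_mul_assoc, mul_smul_comm, hu]) (fun v => ?_) hx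
  rw [ιMulti_two, mul_assoc, anticomm a (v 1), mul_neg, ← mul_assoc,
    anticomm a (v 0), neg_mul, neg_neg, mul_assoc]

lemma comm22 {x y : E5} (hx : x ∈ ⋀[ℂ]^2 V5) (hy : y ∈ ⋀[ℂ]^2 V5) : x * y = y * x := by
  refine epow_induction 2 (p := fun y => x * y = y * x) (by simp)
    (fun u v hu hv => by rw [add_mul, mul_add, hu, hv])
    (fun c u hu => by rw [smul_mul_assoc, mul_smul_comm, hu]) (fun v => ?_) hy
  rw [ιMulti_two, ← mul_assoc, comm21 hx (v 0), mul_assoc, comm21 hx (v 1), ← mul_assoc]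

lemma ctr_mem1 (φ : Module.Dual ℂ V5) {x : E5} (hx : x ∈ ⋀[ℂ]^2 V5) :
    ctrC φ x ∈ ⋀[ℂ]^1 V5 := by
  refine epow_induction 2 (p := fun y => ctrC φ y ∈ ⋀[ℂ]^1 V5) (by simp)
    (fun u v hu hv => by rw [map_add]; exact Submodule.add_mem _ hu hv)
    (fun c u hu => by rw [map_smul]; exact Submodule.smul_mem _ _ hu) (fun v => ?_) hx
  rw [ιMulti_two, ctrC_ι_mul, ctrC_ι, ← Algebra.commutes, ← Algebra.smul_def]
  exact Submodule.sub_mem _ (Submodule.smul_mem _ _ (ι_mem_one _))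
    (Submodule.smul_mem _ _ (ι_mem_one _))

lemma ctr_mem2 (φ : Module.Dual ℂ V5) {x : E5} (hx : x ∈ ⋀[ℂ]^3 V5) :
    ctrC φ x ∈ ⋀[ℂ]^2 V5 := by
  refine epow_induction 3 (p := fun y => ctrC φ y ∈ ⋀[ℂ]^2 V5) (by simp)
    (fun u v hu hv => by rw [map_add]; exact Submodule.add_mem _ hu hv)
    (fun c u hu => by rw [map_smul]; exact Submodule.smul_mem _ _ hu) (fun v => ?_) hx
  rw [ιMulti_three, ctrC_ι_mul, ctrC_ι_mul, ctrC_ι, ← Algebra.commutes, ← Algebra.smul_def]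
  simp only [mul_sub, mul_smul_comm]
  refine Submodule.sub_mem _ (Submodule.smul_mem _ _ (ι_mul_ι_mem_two _ _))
    (Submodule.sub_mem _ (Submodule.smul_mem _ _ (ι_mul_ι_mem_two _ _))
      (Submodule.smul_mem _ _ (ι_mul_ι_mem_two _ _)))

lemma blade6_zero (v : Fin 6 → V5) : ιMulti ℂ 6 v = 0 := by
  refine AlternatingMap.map_linearDependent (ιMulti ℂ 6) v ?_
  intro h
  have hc := h.fintype_card_le_finrank
  rw [Module.finrank_fin_fun, Fintype.card_fin] at hc
  omega

lemma prod6_zero (a b c d e f : V5) :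
    ι ℂ a * ((ι ℂ b * ι ℂ c) * (ι ℂ d * (ι ℂ e * ι ℂ f))) = 0 := by
  have h := blade6_zero ![a, b, c, d, e, f]
  rw [ιMulti_apply] at h
  simpa [List.ofFn_succ, mul_assoc] using h

lemma mul123 (a : V5) {x y : E5} (hx : x ∈ ⋀[ℂ]^2 V5) (hy : y ∈ ⋀[ℂ]^3 V5) :
    ι ℂ a * (x * y) = 0 := by
  refine epow_induction 3 (p := fun y => ι ℂ a * (x * y) = 0) (by simp)
    (fun u v hu hv => by rw [mul_add, mul_add, hu, hv, add_zero])
    (fun c u hu => by rw [mul_smul_comm, mul_smul_comm, hu, smul_zero])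
    (fun w => ?_) hy
  refine epow_induction 2 (p := fun x => ι ℂ a * (x * ιMulti ℂ 3 w) = 0) (by simp)
    (fun u v hu hv => by rw [add_mul, mul_add, hu, hv, add_zero])
    (fun c u hu => by rw [smul_mul_assoc, mul_smul_comm, hu, smul_zero])
    (fun u => ?_) hx
  rw [ιMulti_two, ιMulti_three]
  exact prod6_zero a _ _ _ _ _

lemma prod6R_zero (a b c d e f : V5) :
    ι ℂ a * (ι ℂ b * (ι ℂ c * (ι ℂ d * (ι ℂ e * ι ℂ f)))) = 0 := by
  have h := prod6_zero a b c d e f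
  rwa [mul_assoc] at h

lemma mul222 {x y z : E5} (hx : x ∈ ⋀[ℂ]^2 V5) (hy : y ∈ ⋀[ℂ]^2 V5)
    (hz : z ∈ ⋀[ℂ]^2 V5) : x * (y * z) = 0 := by
  refine epow_induction 2 (p := fun x => x * (y * z) = 0) (by simp)
    (fun u v hu hv => by rw [add_mul, hu, hv, add_zero])
    (fun c u hu => by rw [smul_mul_assoc, hu, smul_zero])
    (fun u => ?_) hx
  refine epow_induction 2 (p := fun y => ιMulti ℂ 2 u * (y * z) = 0) (by simp)
    (fun s t hs ht => by rw [add_mul, mul_add, hs, ht, add_zero])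
    (fun c s hs => by rw [smul_mul_assoc, mul_smul_comm, hs, smul_zero])
    (fun w => ?_) hy
  refine epow_induction 2 (p := fun z => ιMulti ℂ 2 u * (ιMulti ℂ 2 w * z) = 0) (by simp)
    (fun s t hs ht => by rw [mul_add, mul_add, hs, ht, add_zero])
    (fun c s hs => by rw [mul_smul_comm, mul_smul_comm, hs, smul_zero])
    (fun r => ?_) hz
  simp only [ιMulti_two, mul_assoc]
  exact prod6R_zero _ _ _ _ _ _

lemma ctr_mul2 (φ : Module.Dual ℂ V5) {x : E5} (hx : x ∈ ⋀[ℂ]^2 V5) (y : E5) :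
    ctrC φ (x * y) = ctrC φ x * y + x * ctrC φ y := by
  refine epow_induction 2 (p := fun x => ctrC φ (x * y) = ctrC φ x * y + x * ctrC φ y)
    (by simp) (fun u v hu hv => by
      simp only [add_mul, map_add, hu, hv]; abel)
    (fun c u hu => by
      rw [smul_mul_assoc, map_smul, hu, map_smul, smul_add, smul_mul_assoc, smul_mul_assoc])
    (fun v => ?_) hx
  rw [ιMulti_two, mul_assoc, ctrC_ι_mul, ctrC_ι_mul, ctrC_ι_mul, ctrC_ι,
    ← Algebra.commutes, ← Algebra.smul_def]
  simp only [mul_sub, sub_mul, smul_mul_assoc, mul_smul_comm, smul_sub, mul_assoc]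
  abel

lemma swap1 (a b : V5) (X : E5) : ι ℂ a * (ι ℂ b * X) = -(ι ℂ b * (ι ℂ a * X)) := by
  rw [← mul_assoc, anticomm b a, neg_mul, mul_assoc]

lemma ctr_cube_zero (φ : Module.Dual ℂ V5) {x : E5} (hx : x ∈ ⋀[ℂ]^2 V5) :
    ctrC φ x * (x * x) = 0 := by
  obtain ⟨w, hw⟩ := mem_one (ctr_mem1 φ hx)
  have h0 : x * (x * x) = 0 := mul222 hx hx hx
  have h1 := congrArg (ctrC φ) h0
  rw [map_zero, ctr_mul2 φ hx, ctr_mul2 φ hx, hw] at h1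
  have e1 : x * (ι ℂ w * x) = ι ℂ w * (x * x) := by
    rw [← mul_assoc, comm21 hx w, mul_assoc]
  have e2 : x * (x * ι ℂ w) = ι ℂ w * (x * x) := by
    rw [comm21 hx w, e1]
  rw [mul_add, e1, e2] at h1
  have h3 : (3 : ℂ) • (ι ℂ w * (x * x)) = 0 := by rw [← h1]; module
  rw [hw]
  rcases smul_eq_zero.mp h3 with h | h
  · exact absurd h (by norm_num)
  · exact h

lemma key_rel (φ : Module.Dual ℂ V5) (v₁ : V5) {x y : E5}
    (hx : x ∈ ⋀[ℂ]^2 V5) (hy : y ∈ ⋀[ℂ]^3 V5) :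
    φ v₁ • (x * y) = ι ℂ v₁ * (ctrC φ x * y + x * ctrC φ y) := by
  have h0 : ctrC φ (ι ℂ v₁ * (x * y)) = 0 := by rw [mul123 v₁ hx hy, map_zero]
  rw [ctrC_ι_mul, ctr_mul2 φ hx, sub_eq_zero] at h0
  exact h0

set_option maxHeartbeats 2000000 in
lemma key_identity (l₀ : ℂ) (v₁ : V5) {l₂ l₃ l₄ l₅ : E5}
    (h₂ : l₂ ∈ ⋀[ℂ]^2 V5) (h₃ : l₃ ∈ ⋀[ℂ]^3 V5)
    (h4 : l₄ = (2 * l₀)⁻¹ • (l₂ * l₂ - 2 • (ι ℂ v₁ * l₃)))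
    (h5 : l₅ = l₀⁻¹ • (l₂ * l₃ - ι ℂ v₁ * l₄))
    (φ : Module.Dual ℂ V5) :
    -(2 • (ctrC φ (ι ℂ v₁) * l₅)) + 2 • (ctrC φ l₂ * l₄) + ctrC φ l₃ * l₃ =
    ctrC φ (l₃ - l₀⁻¹ • (ι ℂ v₁ * l₂)) * (l₃ - l₀⁻¹ • (ι ℂ v₁ * l₂)) := by
  obtain ⟨w, hw⟩ := mem_one (ctr_mem1 φ h₂)
  have ht2 := ctr_mem2 φ h₃
  have hnat : ∀ z : E5, (2 : ℕ) • z = (2 : ℂ) • z := fun z => by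
    rw [← Nat.cast_smul_eq_nsmul ℂ 2 z, Nat.cast_ofNat]
  have f1 : ι ℂ v₁ * ι ℂ v₁ = 0 := ι_sq_zero v₁
  have m1 : ι ℂ v₁ * (ι ℂ v₁ * l₃) = 0 := by rw [← mul_assoc, f1, zero_mul]
  have m2 : l₂ * (ι ℂ v₁ * l₂) = ι ℂ v₁ * (l₂ * l₂) := by
    rw [← mul_assoc, comm21 h₂ v₁, mul_assoc]
  have m3 : ctrC φ l₃ * (ι ℂ v₁ * l₂) = ι ℂ v₁ * (l₂ * ctrC φ l₃) := by
    rw [← mul_assoc, comm21 ht2 v₁, mul_assoc, comm22 ht2 h₂]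
  have m4 : ι ℂ w * (ι ℂ v₁ * l₃) = -(ι ℂ v₁ * (ι ℂ w * l₃)) := swap1 w v₁ l₃
  have m5 : ι ℂ w * (l₂ * l₂) = 0 := by rw [← hw]; exact ctr_cube_zero φ h₂
  have m6 : ∀ X : E5, ι ℂ v₁ * (ι ℂ w * (ι ℂ v₁ * X)) = 0 := fun X => by
    rw [swap1 w v₁ X, mul_neg, ← mul_assoc, f1, zero_mul, neg_zero]
  have m7 : ι ℂ v₁ * (l₂ * ctrC φ l₃) =
      φ v₁ • (l₂ * l₃) - ι ℂ v₁ * (ι ℂ w * l₃) := by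
    have h := key_rel φ v₁ h₂ h₃
    rw [hw, mul_add] at h
    rw [eq_sub_iff_add_eq, h, add_comm]
  subst h5 h4
  rw [ctrC_ι φ v₁, ← Algebra.smul_def, map_sub, map_smul, ctrC_ι_mul, hw,
    mul_inv (2 : ℂ) l₀]
  simp only [hnat, mul_sub, sub_mul, add_mul, mul_add, smul_sub, smul_add,
    smul_mul_assoc, mul_smul_comm, smul_smul, mul_assoc, m1, m2, m3, m4, m5, m6, m7,
    mul_zero, smul_zero, zero_mul]
  module

/-- for `λ₀ ∈ ℂ`, `λ₀ ≠ 0` and `λ_k ∈ ΛᵏV` (`k = 1,…,5`, `V = ℂ⁵`), the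
gravitational-spinor equations
(E1) `λ₀λ₅ + λ₁∧λ₄ − λ₂∧λ₃ = 0`,
(E2) `−2λ₀λ₄ − 2λ₁∧λ₃ + λ₂∧λ₂ = 0`,
(E3) `−2ι_φ(λ₁)λ₅ + 2ι_φ(λ₂)∧λ₄ + ι_φ(λ₃)∧λ₃ = 0` for every `φ ∈ V*`,
hold iff `λ₄ = (λ₂∧λ₂ − 2λ₁∧λ₃)/(2λ₀)`, `λ₅ = (λ₂∧λ₃ − λ₁∧λ₄)/λ₀` and
`(ι_φτ₃)∧τ₃ = 0` for every `φ ∈ V*`, where `τ₃ = λ₃ − (1/λ₀)·λ₁∧λ₂`. -/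
theorem gravSpinor_chart_solution (l₀ : ℂ) (hl₀ : l₀ ≠ 0) (l₁ l₂ l₃ l₄ l₅ : E5)
    (h₁ : l₁ ∈ ⋀[ℂ]^1 (Fin 5 → ℂ)) (h₂ : l₂ ∈ ⋀[ℂ]^2 (Fin 5 → ℂ))
    (h₃ : l₃ ∈ ⋀[ℂ]^3 (Fin 5 → ℂ)) (h₄ : l₄ ∈ ⋀[ℂ]^4 (Fin 5 → ℂ))
    (h₅ : l₅ ∈ ⋀[ℂ]^5 (Fin 5 → ℂ)) :
    (l₀ • l₅ + l₁ * l₄ - l₂ * l₃ = 0 ∧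
      -(2 • (l₀ • l₄)) - 2 • (l₁ * l₃) + l₂ * l₂ = 0 ∧
      ∀ φ : Module.Dual ℂ (Fin 5 → ℂ),
        -(2 • (ctrC φ l₁ * l₅)) + 2 • (ctrC φ l₂ * l₄) + ctrC φ l₃ * l₃ = 0) ↔
    (l₄ = (2 * l₀)⁻¹ • (l₂ * l₂ - 2 • (l₁ * l₃)) ∧
      l₅ = l₀⁻¹ • (l₂ * l₃ - l₁ * l₄) ∧
      ∀ φ : Module.Dual ℂ (Fin 5 → ℂ),
        ctrC φ (l₃ - l₀⁻¹ • (l₁ * l₂)) * (l₃ - l₀⁻¹ • (l₁ * l₂)) = 0) := by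
  obtain ⟨v₁, rfl⟩ := mem_one h₁
  have h2l₀ : (2 : ℂ) * l₀ ≠ 0 := mul_ne_zero two_ne_zero hl₀
  constructor
  · rintro ⟨e1, e2, e3⟩
    have hf4 : l₄ = (2 * l₀)⁻¹ • (l₂ * l₂ - 2 • (ι ℂ v₁ * l₃)) := by
      rw [eq_comm, inv_smul_eq_iff₀ h2l₀, ← sub_eq_zero, ← e2]
      module
    have hf5 : l₅ = l₀⁻¹ • (l₂ * l₃ - ι ℂ v₁ * l₄) := by
      rw [eq_comm, inv_smul_eq_iff₀ hl₀, ← sub_eq_zero, ← neg_eq_zero, ← e1]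
      module
    refine ⟨hf4, hf5, fun φ => ?_⟩
    rw [← key_identity l₀ v₁ h₂ h₃ hf4 hf5 φ]
    exact e3 φ
  · rintro ⟨hf4, hf5, hτ⟩
    refine ⟨?_, ?_, fun φ => ?_⟩
    · rw [hf5, smul_inv_smul₀ hl₀]
      abel
    · rw [hf4, smul_smul, mul_inv,
        show l₀ * ((2 : ℂ)⁻¹ * l₀⁻¹) = (2 : ℂ)⁻¹ by
          rw [mul_comm, mul_assoc, inv_mul_cancel₀ hl₀, mul_one]]
      module
    · rw [key_identity l₀ v₁ h₂ h₃ hf4 hf5 φ]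
      exact hτ φ
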